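/- On ℝ⁶ with coordinates (x₁, x₂, x₃, x₄, y₁, y₂), let Γ be the 4D cyclic Lotka–Volterra vector field extended by zero in the y₁, y₂ directions, let X_s = x₁∂/∂x₁ + x₂∂/∂x₂ + x₃∂/∂x₃ + x₄∂/∂x₄ be the Euler scaling field, and let Y₁ = ∂/∂y₁, Y₂ = ∂/∂y₂. Define the binary bracket {f, g} := (Γf)(Y₁g) − (Y₁f)(Γg) + (Γf)(X_s g) − (X_s f)(Γ g) + (Y₁ f)(Y₂ g) − (Y₂ f)(Y₁ g), induced by the bivector field 𝒩 = Γ∧Y₁ + Γ∧X_s + Y₁∧Y₂, and set h_Σ = x₁ + x₂ + x₃ + x₄. Then X_s h_Σ = h_Σ, the vector field (Γ h_Σ)·X_s − (X_s h_Σ)·Γ equals −h_Σ·Γ, and for every smooth function f on ℝ⁶, {f, h_Σ} = h_Σ · (Γ f); i.e. the Lotka–Volterra dynamics is quasi-Hamiltonian with respect to 𝒩 with multiplier h_Σ, which is a first integral of Γ. -/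
import Mathlib


/-- A (not necessarily smooth) vector field on `ℝⁿ`, i.e. a map `ℝⁿ → ℝⁿ`. -/
abbrev VF (n : ℕ) : Type := (Fin n → ℝ) → (Fin n → ℝ)

/-- The action of a vector field `X` on a function `f`:
`(X f)(x) = Df(x)[X(x)]` (directional derivative). -/
noncomputable def vAct {n : ℕ} (X : VF n) (f : (Fin n → ℝ) → ℝ) : (Fin n → ℝ) → ℝ :=
  fun x => fderiv ℝ f x (X x)

/-- The Lie bracket of two vector fields:
`[X, Y](x) = DY(x)[X(x)] − DX(x)[Y(x)]`. -/
noncomputable def vLie {n : ℕ} (X Y : VF n) : VF n :=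
  fun x => fderiv ℝ Y x (X x) - fderiv ℝ X x (Y x)

/-- The `m`-ary bracket induced by the decomposable `m`-vector field `Z 0 ∧ ⋯ ∧ Z (m-1)`:
the determinant of the matrix whose `(i, j)` entry is `(Z i) (f j)`. -/
noncomputable def detBracket {n m : ℕ} (Z : Fin m → VF n)
    (f : Fin m → ((Fin n → ℝ) → ℝ)) : (Fin n → ℝ) → ℝ :=
  fun x => Matrix.det (Matrix.of fun i j => vAct (Z i) (f j) x)

/-- The generalized Jacobi identity of order `m` for an `m`-ary bracket `B` on smooth
functions on `ℝⁿ`: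
`∑_{σ ∈ S_{2m−1}} sign σ • B(B(f_{σ(1)}, …, f_{σ(m)}), f_{σ(m+1)}, …, f_{σ(2m−1)}) = 0`. -/
def GJI (n m : ℕ) (B : (Fin m → ((Fin n → ℝ) → ℝ)) → ((Fin n → ℝ) → ℝ)) : Prop :=
  ∀ f : Fin (2 * m - 1) → ((Fin n → ℝ) → ℝ), (∀ i, ContDiff ℝ (⊤ : ℕ∞) (f i)) →
    ∀ x, (∑ σ : Equiv.Perm (Fin (2 * m - 1)),
      ((Equiv.Perm.sign σ : ℤ) : ℝ) *
        B (fun i : Fin m =>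
            if _hi : (i : ℕ) = 0 then
              B (fun k : Fin m => f (σ ⟨(k : ℕ), lt_of_lt_of_le k.isLt (by omega)⟩))
            else f (σ ⟨m - 1 + (i : ℕ), by have hi := i.isLt; omega⟩)) x) = 0

/-- The 4D cyclic Lotka–Volterra vector field extended by zero to `ℝ⁶` with coordinates
`(x₁, x₂, x₃, x₄, y₁, y₂)` (0-indexed: `x 0 = x₁, …, x 3 = x₄, x 4 = y₁, x 5 = y₂`). -/
def ΓLV6 : VF 6 := fun x =>
  ![x 0 * (x 1 - x 3), x 1 * (x 2 - x 0), x 2 * (x 3 - x 1), x 3 * (x 0 - x 2), 0, 0]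

/-- The Euler scaling field `X_s = x₁∂/∂x₁ + x₂∂/∂x₂ + x₃∂/∂x₃ + x₄∂/∂x₄`. -/
def XsLV : VF 6 := fun x => ![x 0, x 1, x 2, x 3, 0, 0]

/-- The spectator field `Y₁ = ∂/∂y₁`. -/
def Y1LV : VF 6 := fun _ => ![0, 0, 0, 0, 1, 0]

/-- The spectator field `Y₂ = ∂/∂y₂`. -/
def Y2LV : VF 6 := fun _ => ![0, 0, 0, 0, 0, 1]

/-- `h_Σ = x₁ + x₂ + x₃ + x₄`. -/
def hSigma : (Fin 6 → ℝ) → ℝ := fun x => x 0 + x 1 + x 2 + x 3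

/-- The binary bracket induced by the bivector field `𝒩 = Γ∧Y₁ + Γ∧X_s + Y₁∧Y₂`:
`{f, g} = (Γf)(Y₁g) − (Y₁f)(Γg) + (Γf)(X_s g) − (X_s f)(Γg) + (Y₁f)(Y₂g) − (Y₂f)(Y₁g)`. -/
noncomputable def pbLV (f g : (Fin 6 → ℝ) → ℝ) : (Fin 6 → ℝ) → ℝ :=
  fun x =>
    vAct ΓLV6 f x * vAct Y1LV g x - vAct Y1LV f x * vAct ΓLV6 g x
      + vAct ΓLV6 f x * vAct XsLV g x - vAct XsLV f x * vAct ΓLV6 g x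
      + vAct Y1LV f x * vAct Y2LV g x - vAct Y2LV f x * vAct Y1LV g x

/-- For the extended Lotka–Volterra system on `ℝ⁶`:
`X_s h_Σ = h_Σ`; the vector field `(Γ h_Σ)·X_s − (X_s h_Σ)·Γ` equals `−h_Σ·Γ`; for every
smooth `f`, `{f, h_Σ} = h_Σ ⬝ (Γ f)` (the dynamics is quasi-Hamiltonian with respect to
`𝒩 = Γ∧Y₁ + Γ∧X_s + Y₁∧Y₂` with multiplier `h_Σ`); and `h_Σ` is a first integral of
`Γ`. -/

noncomputable def hSigmaL : (Fin 6 → ℝ) →L[ℝ] ℝ :=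
  (ContinuousLinearMap.proj (R := ℝ) (φ := fun _ : Fin 6 => ℝ) 0) +
  (ContinuousLinearMap.proj (R := ℝ) (φ := fun _ : Fin 6 => ℝ) 1) +
  (ContinuousLinearMap.proj (R := ℝ) (φ := fun _ : Fin 6 => ℝ) 2) +
  (ContinuousLinearMap.proj (R := ℝ) (φ := fun _ : Fin 6 => ℝ) 3)

lemma fderiv_hSigma (x v : Fin 6 → ℝ) :
    fderiv ℝ hSigma x v = v 0 + v 1 + v 2 + v 3 := by
  have h : hSigma = ⇑hSigmaL := by
    funext y
    simp [hSigma, hSigmaL]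
  rw [h, hSigmaL.fderiv]
  simp [hSigmaL]

theorem statement16 :
    vAct XsLV hSigma = hSigma ∧
    (fun x : Fin 6 → ℝ =>
        vAct ΓLV6 hSigma x • XsLV x - vAct XsLV hSigma x • ΓLV6 x)
      = (fun x : Fin 6 → ℝ => -(hSigma x • ΓLV6 x)) ∧
    (∀ f : (Fin 6 → ℝ) → ℝ, ContDiff ℝ (⊤ : ℕ∞) f → ∀ x,
        pbLV f hSigma x = hSigma x * vAct ΓLV6 f x) ∧
    vAct ΓLV6 hSigma = 0 := by
  refine ⟨?_, ?_, ?_, ?_⟩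
  · funext x
    simp [vAct, fderiv_hSigma, XsLV, hSigma]
  · funext x
    simp only [vAct, fderiv_hSigma, XsLV, ΓLV6, hSigma]
    funext i
    fin_cases i <;>
      simp only [Pi.sub_apply, Pi.smul_apply, Pi.neg_apply, smul_eq_mul,
        Matrix.cons_val_zero, Matrix.cons_val_one, Matrix.head_cons,
        Matrix.cons_val_two, Matrix.tail_cons, Matrix.cons_val_three,
        Matrix.cons_val_four, Matrix.cons_val_fin_one] <;> ring
  · intro f _ x
    simp only [pbLV, vAct, fderiv_hSigma, XsLV, ΓLV6, Y1LV, Y2LV, hSigma]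
    simp
    ring
  · funext x
    simp [vAct, fderiv_hSigma, ΓLV6, hSigma]
    ring
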